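/- Let $a \ge b \ge 0$ be integers. If the sequences $\{x_n\}$ and $\{y_n\}$ of nonnegative reals are log-concave (with no internal zeros), then so is the sequence $z_n = \sum_{k=0}^n \binom{a+n}{b+k} x_k y_{n-k}$. -/

import Mathlib

namespace Stmt16Aux

/-- binomial coefficient with integer lower index, as a real. -/
noncomputable def ch (m : ℕ) (r : ℤ) : ℝ := if 0 ≤ r then (m.choose r.toNat : ℝ) else 0

lemma ch_nonneg (m : ℕ) (r : ℤ) : 0 ≤ ch m r := by
  unfold ch; split <;> positivity

lemma ch_neg (m : ℕ) {r : ℤ} (h : r < 0) : ch m r = 0 := by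
  unfold ch; rw [if_neg (by omega)]

lemma ch_coe (m k : ℕ) : ch m (k : ℤ) = (m.choose k : ℝ) := by
  unfold ch; rw [if_pos (by positivity)]; simp

lemma ch_pascal (m : ℕ) (r : ℤ) : ch (m+1) r = ch m r + ch m (r-1) := by
  rcases lt_trichotomy r 0 with h | h | h
  · rw [ch_neg _ h, ch_neg _ h, ch_neg _ (by omega)]; ring
  · subst h
    simp [ch]
  · obtain ⟨k, rfl⟩ : ∃ k : ℕ, r = (k : ℤ) + 1 := ⟨(r-1).toNat, by omega⟩
    rw [show ((k:ℤ) + 1 - 1) = (k:ℤ) by ring, ch_coe,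
      show ((k:ℤ)+1) = ((k+1:ℕ):ℤ) by push_cast; ring, ch_coe, ch_coe]
    rw [Nat.choose_succ_succ]
    push_cast; ring

lemma L1n (m i j : ℕ) (h : i ≤ j) :
    m.choose j * (m+1).choose i ≤ m.choose i * (m+1).choose j := by
  rcases Nat.lt_or_ge m j with hj | hj
  · rw [Nat.choose_eq_zero_of_lt hj]; simp
  · have hi : i ≤ m := le_trans h hj
    have h1 : 0 < m + 1 - i := by omega
    have h2 : 0 < m + 1 - j := by omega
    apply Nat.le_of_mul_le_mul_right _ (Nat.mul_pos h1 h2)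
    have e1 := Nat.choose_mul_succ_eq m i
    have e2 := Nat.choose_mul_succ_eq m j
    calc m.choose j * (m+1).choose i * ((m+1-i) * (m+1-j))
        = ((m+1).choose i * (m+1-i)) * (m.choose j * (m+1-j)) := by ring
      _ = (m.choose i * (m+1)) * (m.choose j * (m+1-j)) := by rw [← e1]
      _ ≤ (m.choose i * (m+1)) * (m.choose j * (m+1-i)) := by
          apply Nat.mul_le_mul_left
          apply Nat.mul_le_mul_left
          omega
      _ = ((m+1).choose j * (m+1-j)) * (m.choose i * (m+1-i)) := by rw [← e2]; ring
      _ = m.choose i * (m+1).choose j * ((m+1-i) * (m+1-j)) := by ring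

lemma L2n (m t r : ℕ) (h : t ≤ r) :
    m.choose t * (m+1).choose (r+1) ≤ m.choose r * (m+1).choose (t+1) := by
  apply Nat.le_of_mul_le_mul_left _ (show 0 < m + 1 by omega)
  have e1 := Nat.add_one_mul_choose_eq m t
  have e2 := Nat.add_one_mul_choose_eq m r
  calc (m+1) * (m.choose t * (m+1).choose (r+1))
      = ((m+1) * m.choose t) * (m+1).choose (r+1) := by ring
    _ = ((m+1).choose (t+1) * (t+1)) * (m+1).choose (r+1) := by rw [e1]
    _ ≤ ((m+1).choose (t+1) * (r+1)) * (m+1).choose (r+1) :=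
        Nat.mul_le_mul (Nat.mul_le_mul le_rfl (by omega)) le_rfl
    _ = (m+1).choose (t+1) * ((m+1).choose (r+1) * (r+1)) := by ring
    _ = (m+1).choose (t+1) * ((m+1) * m.choose r) := by rw [← e2]
    _ = (m+1) * (m.choose r * (m+1).choose (t+1)) := by ring

lemma ch_of_nonneg (m : ℕ) {r : ℤ} (h : 0 ≤ r) : ch m r = (m.choose r.toNat : ℝ) :=
  if_pos h

lemma L1z (m : ℕ) {i j : ℤ} (h : i ≤ j) :
    ch m j * ch (m+1) i ≤ ch m i * ch (m+1) j := by
  rcases lt_or_ge i 0 with hi | hi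
  · rw [ch_neg _ hi, mul_zero]
    exact mul_nonneg (ch_nonneg _ _) (ch_nonneg _ _)
  · have hj : 0 ≤ j := le_trans hi h
    rw [ch_of_nonneg _ hi, ch_of_nonneg _ hj, ch_of_nonneg _ hi, ch_of_nonneg _ hj]
    have := L1n m i.toNat j.toNat (by omega)
    exact_mod_cast this

lemma L2z (m : ℕ) {T S : ℤ} (hT : 2*T ≤ S) :
    ch m (T-1) * ch (m+1) (S-T+1) ≤ ch m (S-T) * ch (m+1) T := by
  rcases lt_or_ge T 1 with hT1 | hT1
  · rw [ch_neg _ (by omega), zero_mul]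
    exact mul_nonneg (ch_nonneg _ _) (ch_nonneg _ _)
  · have h1 : (0:ℤ) ≤ T - 1 := by omega
    have h2 : (0:ℤ) ≤ S - T + 1 := by omega
    have h3 : (0:ℤ) ≤ S - T := by omega
    have h4 : (0:ℤ) ≤ T := by omega
    rw [ch_of_nonneg _ h1, ch_of_nonneg _ h2, ch_of_nonneg _ h3, ch_of_nonneg _ h4]
    have e1 : (S - T + 1).toNat = (S-T).toNat + 1 := by omega
    have e2 : T.toNat = (T-1).toNat + 1 := by omega
    rw [e1, e2]
    have := L2n m (T-1).toNat (S-T).toNat (by omega)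
    exact_mod_cast this


lemma Icc_ins_top {α β : ℤ} (h : α ≤ β) :
    Finset.Icc α β = insert β (Finset.Icc α (β-1)) := by
  ext k; simp only [Finset.mem_Icc, Finset.mem_insert]; omega

lemma Icc_ins_bot {α β : ℤ} (h : α ≤ β) :
    Finset.Icc α β = insert α (Finset.Icc (α+1) β) := by
  ext k; simp only [Finset.mem_Icc, Finset.mem_insert]; omega

lemma sum_ins_top (f : ℤ → ℝ) {α β : ℤ} (h : α ≤ β) :
    ∑ r ∈ Finset.Icc α β, f r = (∑ r ∈ Finset.Icc α (β-1), f r) + f β := by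
  rw [Icc_ins_top h, Finset.sum_insert (by simp only [Finset.mem_Icc]; omega)]
  ring

lemma sum_ins_bot (f : ℤ → ℝ) {α β : ℤ} (h : α ≤ β) :
    ∑ r ∈ Finset.Icc α β, f r = f α + ∑ r ∈ Finset.Icc (α+1) β, f r := by
  rw [Icc_ins_bot h, Finset.sum_insert (by simp only [Finset.mem_Icc]; omega)]

lemma tel (A : ℤ → ℝ) {α β : ℤ} (h : α ≤ β) :
    ∑ r ∈ Finset.Icc α β, (A (r-1) - A r) = A (α-1) - A β := by
  refine Int.le_induction
    (motive := fun b _ => ∑ r ∈ Finset.Icc α b, (A (r-1) - A r) = A (α-1) - A b) ?_ ?_ β h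
  · show ∑ r ∈ Finset.Icc α α, (A (r-1) - A r) = A (α-1) - A α
    rw [Finset.Icc_self, Finset.sum_singleton]
  · intro β hb ih
    show ∑ r ∈ Finset.Icc α (β+1), (A (r-1) - A r) = A (α-1) - A (β+1)
    rw [sum_ins_top _ (by omega : α ≤ β + 1), show β + 1 - 1 = β by ring, ih]
    ring

/-- The key binomial inequality. -/
lemma key (m : ℕ) (bz s t p : ℤ) (ht : 2*t ≤ s) (hp : 2*p ≤ s) :
    ∑ i ∈ Finset.Icc (max t (p-1)) (min (s-t) (s-p-1)),
      ch m (bz+i) * ch (m+2) (bz+(s-i))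
    ≤ ∑ i ∈ Finset.Icc (max t p) (min (s-t) (s-p)),
      ch (m+1) (bz+i) * ch (m+1) (bz+(s-i)) := by
  set f : ℤ → ℝ := fun i => ch (m+1) (bz+i) * ch (m+1) (bz+(s-i)) with hf
  set g : ℤ → ℝ := fun i => ch m (bz+i) * ch (m+2) (bz+(s-i)) with hg
  set A : ℤ → ℝ := fun i => ch m (bz+i) * ch (m+1) (bz+(s-(i+1))) with hA
  have hfg : ∀ i : ℤ, f i - g i = A (i-1) - A i := by
    intro i
    simp only [hf, hg, hA]
    rw [ch_pascal m (bz+i), show (m+2) = (m+1)+1 by ring, ch_pascal (m+1) (bz+(s-i)),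
      show bz + i - 1 = bz + (i-1) by ring,
      show bz + (s - i) - 1 = bz + (s - (i+1)) by ring,
      show bz + (s - (i-1+1)) = bz + (s - i) by ring]
    ring
  have hgnn : ∀ i : ℤ, 0 ≤ g i := fun i => mul_nonneg (ch_nonneg _ _) (ch_nonneg _ _)
  rcases le_or_gt p t with hpt | htp
  · -- p ≤ t : ranges become Icc t (s-t), RHS range for g is a subset
    have hr : Finset.Icc (max t p) (min (s-t) (s-p)) = Finset.Icc t (s-t) := by
      congr 1 <;> omega
    rw [hr]
    have hsub : Finset.Icc (max t (p-1)) (min (s-t) (s-p-1)) ⊆ Finset.Icc t (s-t) := by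
      intro i hi
      simp only [Finset.mem_Icc] at hi ⊢
      omega
    have h1 : ∑ i ∈ Finset.Icc (max t (p-1)) (min (s-t) (s-p-1)), g i
        ≤ ∑ i ∈ Finset.Icc t (s-t), g i :=
      Finset.sum_le_sum_of_subset_of_nonneg hsub (fun i _ _ => hgnn i)
    have h2 : ∑ i ∈ Finset.Icc t (s-t), (f i - g i) = A (t-1) - A (s-t) := by
      rw [show (∑ i ∈ Finset.Icc t (s-t), (f i - g i))
          = ∑ i ∈ Finset.Icc t (s-t), (A (i-1) - A i) from
          Finset.sum_congr rfl (fun i _ => hfg i)]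
      exact tel A (by omega)
    have h3 : A (s-t) ≤ A (t-1) := by
      simp only [hA]
      rw [show s - (s - t + 1) = t - 1 by ring, show s - (t - 1 + 1) = s - t by ring]
      exact L1z m (show bz + (t-1) ≤ bz + (s-t) by omega)
    have h4 : ∑ i ∈ Finset.Icc t (s-t), g i ≤ ∑ i ∈ Finset.Icc t (s-t), f i := by
      rw [← sub_nonneg, ← Finset.sum_sub_distrib, h2]
      linarith
    linarith
  · -- t < p
    have hr1 : Finset.Icc (max t p) (min (s-t) (s-p)) = Finset.Icc p (s-p) := by
      congr 1 <;> omega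
    have hr2 : Finset.Icc (max t (p-1)) (min (s-t) (s-p-1)) = Finset.Icc (p-1) (s-p-1) := by
      congr 1 <;> omega
    rw [hr1, hr2]
    have e1 : ∑ i ∈ Finset.Icc (p-1) (s-p-1), g i
        = g (p-1) + ∑ i ∈ Finset.Icc p (s-p-1), g i := by
      rw [sum_ins_bot g (by omega), show p - 1 + 1 = p by ring]
    have e2 : ∑ i ∈ Finset.Icc p (s-p), g i
        = (∑ i ∈ Finset.Icc p (s-p-1), g i) + g (s-p) := sum_ins_top g (by omega)
    have e3 : ∑ i ∈ Finset.Icc p (s-p), (f i - g i) = A (p-1) - A (s-p) := by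
      rw [show (∑ i ∈ Finset.Icc p (s-p), (f i - g i))
          = ∑ i ∈ Finset.Icc p (s-p), (A (i-1) - A i) from
          Finset.sum_congr rfl (fun i _ => hfg i)]
      exact tel A (by omega)
    have e4 : g (p-1) - A (p-1) = ch m (bz+(p-1)) * ch (m+1) (bz+(s-p)+1) := by
      simp only [hg, hA]
      rw [show (m+2) = (m+1)+1 by ring, ch_pascal (m+1) (bz+(s-(p-1))),
        show bz + (s - (p-1)) - 1 = bz + (s - (p-1+1)) by ring,
        show s - (p - 1 + 1) = s - p by ring,
        show bz + (s - (p-1)) = bz + (s-p) + 1 by ring]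
      ring
    have e5 : g (s-p) - A (s-p) = ch m (bz+(s-p)) * ch (m+1) (bz+p) := by
      simp only [hg, hA]
      rw [show (m+2) = (m+1)+1 by ring, ch_pascal (m+1) (bz+(s-(s-p))),
        show bz + (s - (s - p)) = bz + p by ring,
        show bz + p - 1 = bz + (s - (s - p + 1)) by ring]
      ring
    have e6 : ch m (bz+(p-1)) * ch (m+1) (bz+(s-p)+1)
        ≤ ch m (bz+(s-p)) * ch (m+1) (bz+p) := by
      have := L2z m (T := bz + p) (S := 2*bz + s) (by omega)
      rw [show bz + p - 1 = bz + (p-1) by ring,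
        show 2*bz + s - (bz + p) + 1 = bz + (s-p) + 1 by ring,
        show 2*bz + s - (bz + p) = bz + (s - p) by ring] at this
      exact this
    -- combine: Σ_{[p-1,s-p-1]} g ≤ Σ_{[p,s-p]} f
    have : ∑ i ∈ Finset.Icc p (s-p), f i
        = (∑ i ∈ Finset.Icc p (s-p), g i) + (A (p-1) - A (s-p)) := by
      have := e3
      rw [Finset.sum_sub_distrib] at this
      linarith
    rw [this, e2, e1]
    have := e4; have := e5
    linarith

/-- zero extension of a sequence to ℤ -/
noncomputable def ze (x : ℕ → ℝ) : ℤ → ℝ := fun k => if 0 ≤ k then x k.toNat else 0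

lemma ze_coe (x : ℕ → ℝ) (k : ℕ) : ze x (k : ℤ) = x k := by
  unfold ze; rw [if_pos (by positivity)]; simp

lemma ze_neg (x : ℕ → ℝ) {k : ℤ} (h : k < 0) : ze x k = 0 := by
  unfold ze; rw [if_neg (by omega)]

lemma ze_of_nonneg (x : ℕ → ℝ) {k : ℤ} (h : 0 ≤ k) : ze x k = x k.toNat :=
  if_pos h

lemma ze_nonneg (x : ℕ → ℝ) (hx : ∀ k, 0 ≤ x k) (k : ℤ) : 0 ≤ ze x k := by
  unfold ze; split
  · exact hx _
  · exact le_refl 0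

/-- chain lemma in ℕ -/
lemma F1n (x : ℕ → ℝ) (hnn : ∀ k, 0 ≤ x k)
    (hlc : ∀ k : ℕ, x k * x (k + 2) ≤ x (k + 1) ^ 2)
    (hniz : ∀ i j k : ℕ, i < j → j < k → x i ≠ 0 → x k ≠ 0 → x j ≠ 0) :
    ∀ (D P : ℕ), 0 < x P → 0 < x (P + D + 2) →
      x P * x (P + D + 2) ≤ x (P + 1) * x (P + D + 1) := by
  intro D
  induction D with
  | zero =>
    intro P hP h2
    have := hlc P
    calc x P * x (P + 0 + 2) = x P * x (P + 2) := by norm_num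
      _ ≤ x (P+1) ^ 2 := hlc P
      _ = x (P+1) * x (P + 0 + 1) := by ring_nf
  | succ D ih =>
    intro P hP h2
    have h2' : 0 < x (P + D + 3) := by
      have : P + (D+1) + 2 = P + D + 3 := by omega
      rwa [this] at h2
    have hmid : 0 < x (P + D + 2) := by
      have hne := hniz P (P + D + 2) (P + D + 3) (by omega) (by omega)
        (ne_of_gt hP) (ne_of_gt h2')
      exact lt_of_le_of_ne (hnn _) (Ne.symm hne)
    have hmid1 : 0 < x (P + D + 1) := by
      have hne := hniz P (P + D + 1) (P + D + 3) (by omega) (by omega)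
        (ne_of_gt hP) (ne_of_gt h2')
      exact lt_of_le_of_ne (hnn _) (Ne.symm hne)
    have IH := ih P hP hmid
    have hl : x (P+D+1) * x (P+D+3) ≤ x (P+D+2)^2 := by
      have := hlc (P+D+1)
      have e1 : P + D + 1 + 2 = P + D + 3 := by omega
      have e2 : P + D + 1 + 1 = P + D + 2 := by omega
      rwa [e1, e2] at this
    have goal' : x P * x (P + D + 3) * x (P + D + 1) ≤ x (P+1) * x (P+D+2) * x (P+D+1) := by
      have s1 : x P * (x (P+D+1) * x (P+D+3)) ≤ x P * x (P+D+2)^2 :=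
        mul_le_mul_of_nonneg_left hl (hnn P)
      have s2 : (x P * x (P+D+2)) * x (P+D+2) ≤ (x (P+1) * x (P+D+1)) * x (P+D+2) :=
        mul_le_mul_of_nonneg_right IH (hnn _)
      nlinarith [hnn P, hnn (P+1), hnn (P+D+1), hnn (P+D+2), hnn (P+D+3)]
    have := le_of_mul_le_mul_right (by linarith [goal'] :
      x P * x (P + D + 3) * x (P + D + 1) ≤ x (P+1) * x (P+D+2) * x (P+D+1)) hmid1
    have e1 : P + (D+1) + 2 = P + D + 3 := by omega
    have e2 : P + (D+1) + 1 = P + D + 2 := by omega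
    rw [e1, e2]
    exact this

/-- spreading-out inequality over ℤ -/
lemma F1 (x : ℕ → ℝ) (hnn : ∀ k, 0 ≤ x k)
    (hlc : ∀ k : ℕ, x k * x (k + 2) ≤ x (k + 1) ^ 2)
    (hniz : ∀ i j k : ℕ, i < j → j < k → x i ≠ 0 → x k ≠ 0 → x j ≠ 0)
    {i j : ℤ} (h : i ≤ j) :
    ze x (i-1) * ze x (j+1) ≤ ze x i * ze x j := by
  have hnn' : ∀ k : ℤ, 0 ≤ ze x k := ze_nonneg x hnn
  by_cases h1 : ze x (i-1) = 0
  · rw [h1, zero_mul]; exact mul_nonneg (hnn' _) (hnn' _)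
  by_cases h2 : ze x (j+1) = 0
  · rw [h2, mul_zero]; exact mul_nonneg (hnn' _) (hnn' _)
  have hi1 : 0 ≤ i - 1 := by
    by_contra hc
    exact h1 (ze_neg x (by omega))
  have hj1 : 0 ≤ j + 1 := by omega
  set P := (i-1).toNat with hP
  set D := (j-i).toNat with hD
  have ei1 : i - 1 = (P : ℤ) := by omega
  have ei : i = ((P+1 : ℕ) : ℤ) := by push_cast; omega
  have ej : j = ((P+D+1 : ℕ) : ℤ) := by push_cast; omega
  have ej1 : j + 1 = ((P+D+2 : ℕ) : ℤ) := by push_cast; omega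
  rw [ei1, ej1, ei, ej, ze_coe, ze_coe, ze_coe, ze_coe]
  rw [ei1, ze_coe] at h1
  rw [ej1, ze_coe] at h2
  have hPpos : 0 < x P := lt_of_le_of_ne (hnn _) (Ne.symm h1)
  have hDpos : 0 < x (P + D + 2) := lt_of_le_of_ne (hnn _) (Ne.symm h2)
  exact F1n x hnn hlc hniz D P hPpos hDpos

/-- unimodal symmetric representation -/
lemma rep (W : ℤ → ℝ) (s L : ℤ)
    (hsym : ∀ i, W (s - i) = W i) (hlow : ∀ i, i < L → W i = 0) (i : ℤ) :
    W i = ∑ t ∈ Finset.Icc L (s / 2),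
      (W t - W (t - 1)) * (if t ≤ i ∧ i ≤ s - t then 1 else 0) := by
  by_cases h1 : i < L
  · rw [hlow i h1]
    rw [Finset.sum_eq_zero]
    intro t ht
    simp only [Finset.mem_Icc] at ht
    rw [if_neg (by omega), mul_zero]
  by_cases h2 : s - i < L
  · have : W i = 0 := by rw [← hsym i]; exact hlow _ h2
    rw [this, Finset.sum_eq_zero]
    intro t ht
    simp only [Finset.mem_Icc] at ht
    rw [if_neg (by omega), mul_zero]
  push_neg at h1 h2
  set c := s / 2 with hc
  set mm := min i (s - i) with hmm
  have hmc : mm ≤ c := by omega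
  have hLm : L ≤ mm := by omega
  have step1 : ∀ t ∈ Finset.Icc L c,
      (W t - W (t - 1)) * (if t ≤ i ∧ i ≤ s - t then (1:ℝ) else 0)
      = if t ≤ mm then (W t - W (t-1)) else 0 := by
    intro t ht
    by_cases hcond : t ≤ i ∧ i ≤ s - t
    · rw [if_pos hcond, if_pos (by omega), mul_one]
    · rw [if_neg hcond, mul_zero, if_neg (by omega)]
  rw [Finset.sum_congr rfl step1]
  have step2 : ∑ t ∈ Finset.Icc L c, (if t ≤ mm then (W t - W (t-1)) else 0)
      = ∑ t ∈ Finset.Icc L mm, (W t - W (t-1)) := by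
    rw [← Finset.sum_filter]
    congr 1
    ext t
    simp only [Finset.mem_filter, Finset.mem_Icc]
    omega
  rw [step2]
  have step3 : ∑ t ∈ Finset.Icc L mm, (W t - W (t-1))
      = W mm - W (L-1) := by
    have := tel (fun r => -W r) hLm
    have e : ∀ t, W t - W (t-1) = (fun r => -W r) (t-1) - (fun r => -W r) t := by
      intro t; simp; ring
    rw [Finset.sum_congr rfl (fun t _ => e t), this]
    ring
  rw [step3, hlow (L-1) (by omega), sub_zero]
  rcases le_total i (s - i) with hle | hle
  · rw [hmm, min_eq_left hle]
  · rw [hmm, min_eq_right hle, hsym]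


lemma expand_lemma (I T1 T2 : Finset ℤ) (F X Y lam mu : ℤ → ℝ) (u v : ℤ → ℤ → ℝ)
    (hX : ∀ i, X i = ∑ t ∈ T1, lam t * u t i)
    (hY : ∀ i, Y i = ∑ p ∈ T2, mu p * v p i) :
    ∑ i ∈ I, F i * (X i * Y i)
    = ∑ t ∈ T1, ∑ p ∈ T2, (lam t * mu p) * (∑ i ∈ I, F i * (u t i * v p i)) := by
  calc ∑ i ∈ I, F i * (X i * Y i)
      = ∑ i ∈ I, ∑ t ∈ T1, ∑ p ∈ T2, (lam t * mu p) * (F i * (u t i * v p i)) := by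
        apply Finset.sum_congr rfl; intro i _
        rw [hX i, hY i, Finset.sum_mul_sum, Finset.mul_sum]
        apply Finset.sum_congr rfl; intro t _
        rw [Finset.mul_sum]
        apply Finset.sum_congr rfl; intro p _
        ring
    _ = ∑ t ∈ T1, ∑ i ∈ I, ∑ p ∈ T2, (lam t * mu p) * (F i * (u t i * v p i)) :=
        Finset.sum_comm
    _ = ∑ t ∈ T1, ∑ p ∈ T2, ∑ i ∈ I, (lam t * mu p) * (F i * (u t i * v p i)) :=
        Finset.sum_congr rfl fun t _ => Finset.sum_comm
    _ = ∑ t ∈ T1, ∑ p ∈ T2, (lam t * mu p) * ∑ i ∈ I, F i * (u t i * v p i) := by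
        apply Finset.sum_congr rfl; intro t _
        apply Finset.sum_congr rfl; intro p _
        rw [Finset.mul_sum]

lemma sum_range_eq_Icc (f : ℤ → ℝ) (N : ℕ) :
    ∑ k ∈ Finset.range (N+1), f (k : ℤ) = ∑ k ∈ Finset.Icc (0:ℤ) (N:ℤ), f k := by
  induction N with
  | zero => simp
  | succ N ih =>
    rw [Finset.sum_range_succ, ih,
      show Finset.Icc (0:ℤ) ((N+1:ℕ):ℤ) = insert ((N+1:ℕ):ℤ) (Finset.Icc (0:ℤ) (N:ℤ)) by
        ext k; simp only [Finset.mem_Icc, Finset.mem_insert]; push_cast; omega,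
      Finset.sum_insert (by simp only [Finset.mem_Icc]; push_cast; omega)]
    ring

lemma regroup (K : ℤ) (hK : 0 ≤ K) (F G : ℤ → ℝ)
    (hG : ∀ j : ℤ, j < 0 ∨ K < j → G j = 0) :
    (∑ i ∈ Finset.Icc (0:ℤ) K, F i) * (∑ j ∈ Finset.Icc (0:ℤ) K, G j)
    = ∑ s ∈ Finset.Icc (0:ℤ) (2*K), ∑ i ∈ Finset.Icc (0:ℤ) K, F i * G (s - i) := by
  rw [Finset.sum_mul_sum]
  conv_rhs => rw [Finset.sum_comm]
  apply Finset.sum_congr rfl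
  intro i hi
  simp only [Finset.mem_Icc] at hi
  have hmap : Finset.Icc (0:ℤ) (2*K) =
      Finset.map (addLeftEmbedding i) (Finset.Icc (-i) (2*K - i)) := by
    rw [Finset.map_add_left_Icc]
    congr 1 <;> ring
  rw [hmap, Finset.sum_map]
  have : ∀ j : ℤ, F i * G ((addLeftEmbedding i) j - i) = F i * G j := by
    intro j
    congr 1
    simp [addLeftEmbedding_apply]
  rw [Finset.sum_congr rfl (fun j _ => this j)]
  apply Finset.sum_subset
  · intro j hj
    simp only [Finset.mem_Icc] at hj ⊢
    omega
  · intro j hj hj2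
    simp only [Finset.mem_Icc] at hj hj2
    rw [hG j (by omega), mul_zero]

end Stmt16Aux

open Stmt16Aux

/-- Corollary 3.4: for integers `a ≥ b ≥ 0`, if `x`, `y` are
nonnegative log-concave sequences (no internal zeros), then
`z n = ∑_{k=0}^n C(a+n, b+k) x_k y_{n-k}` is log-concave. -/
theorem stmt_16 (a b : ℕ) (hab : b ≤ a) (x y : ℕ → ℝ)
    (hxnonneg : ∀ k, 0 ≤ x k) (hynonneg : ∀ k, 0 ≤ y k)
    (hxlc : ∀ k : ℕ, x k * x (k + 2) ≤ x (k + 1) ^ 2)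
    (hylc : ∀ k : ℕ, y k * y (k + 2) ≤ y (k + 1) ^ 2)
    (hxniz : ∀ i j k : ℕ, i < j → j < k → x i ≠ 0 → x k ≠ 0 → x j ≠ 0)
    (hyniz : ∀ i j k : ℕ, i < j → j < k → y i ≠ 0 → y k ≠ 0 → y j ≠ 0)
    (z : ℕ → ℝ)
    (hz : ∀ n : ℕ, z n = ∑ k ∈ Finset.range (n + 1),
      ((a + n).choose (b + k) : ℝ) * x k * y (n - k)) :
    ∀ n : ℕ, z n * z (n + 2) ≤ z (n + 1) ^ 2 := by
  classical
  intro n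
  set K : ℤ := (n : ℤ) + 2 with hK
  -- Step 1 : express z N as a sum over Finset.Icc (0:ℤ) K
  have hzz : ∀ N : ℕ, N ≤ n + 2 →
      z N = ∑ k ∈ Finset.Icc (0:ℤ) K,
        ch (a+N) ((b:ℤ)+k) * ze x k * ze y ((N:ℤ) - k) := by
    intro N hN
    rw [hz N]
    have e1 : ∀ k ∈ Finset.range (N+1),
        ((a + N).choose (b + k) : ℝ) * x k * y (N - k)
        = ch (a+N) ((b:ℤ)+(k:ℤ)) * ze x (k:ℤ) * ze y ((N:ℤ) - (k:ℤ)) := by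
      intro k hk
      simp only [Finset.mem_range] at hk
      rw [show (b:ℤ)+(k:ℤ) = ((b+k : ℕ):ℤ) by push_cast; ring, ch_coe,
        ze_coe, show (N:ℤ)-(k:ℤ) = ((N-k : ℕ):ℤ) by omega, ze_coe]
    rw [Finset.sum_congr rfl e1,
      sum_range_eq_Icc (fun k => ch (a+N) ((b:ℤ)+k) * ze x k * ze y ((N:ℤ) - k)) N]
    apply Finset.sum_subset
    · intro k hk
      simp only [Finset.mem_Icc] at hk ⊢
      omega
    · intro k hk hk2
      simp only [Finset.mem_Icc] at hk hk2
      rw [ze_neg y (by omega), mul_zero]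
  have hz0 := hzz n (by omega)
  have hz1 := hzz (n+1) (by omega)
  have hz2 := hzz (n+2) (by omega)
  rw [show a + (n+1) = a + n + 1 by omega] at hz1
  rw [show a + (n+2) = a + n + 2 by omega] at hz2
  rw [show (((n+1:ℕ)):ℤ) = (n:ℤ)+1 by push_cast; ring] at hz1
  rw [show (((n+2:ℕ)):ℤ) = (n:ℤ)+2 by push_cast; ring] at hz2
  have hK0 : (0:ℤ) ≤ K := by omega
  -- Step 2 : products as antidiagonal double sums
  have hsq : z (n+1)^2 = ∑ s ∈ Finset.Icc (0:ℤ) (2*K), ∑ i ∈ Finset.Icc (0:ℤ) K,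
      (ch (a+n+1) ((b:ℤ)+i) * ze x i * ze y ((n:ℤ)+1-i))
      * (ch (a+n+1) ((b:ℤ)+(s-i)) * ze x (s-i) * ze y ((n:ℤ)+1-(s-i))) := by
    rw [hz1, sq]
    rw [regroup K hK0 (fun k => ch (a+n+1) ((b:ℤ)+k) * ze x k * ze y ((n:ℤ)+1-k))
      (fun k => ch (a+n+1) ((b:ℤ)+k) * ze x k * ze y ((n:ℤ)+1-k)) ?_]
    intro j hj
    show ch (a+n+1) ((b:ℤ)+j) * ze x j * ze y ((n:ℤ)+1-j) = 0
    rcases hj with hj | hj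
    · rw [ze_neg x hj]; ring
    · rw [ze_neg y (by omega)]; ring
  have hprod : z n * z (n+2) = ∑ s ∈ Finset.Icc (0:ℤ) (2*K), ∑ i ∈ Finset.Icc (0:ℤ) K,
      (ch (a+n) ((b:ℤ)+i) * ze x i * ze y ((n:ℤ)-i))
      * (ch (a+n+2) ((b:ℤ)+(s-i)) * ze x (s-i) * ze y ((n:ℤ)+2-(s-i))) := by
    rw [hz0, hz2]
    rw [regroup K hK0 (fun k => ch (a+n) ((b:ℤ)+k) * ze x k * ze y ((n:ℤ)-k))
      (fun k => ch (a+n+2) ((b:ℤ)+k) * ze x k * ze y ((n:ℤ)+2-k)) ?_]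
    intro j hj
    show ch (a+n+2) ((b:ℤ)+j) * ze x j * ze y ((n:ℤ)+2-j) = 0
    rcases hj with hj | hj
    · rw [ze_neg x hj]; ring
    · rw [ze_neg y (by omega)]; ring
  rw [hsq, hprod]
  apply Finset.sum_le_sum
  intro s hs
  simp only [Finset.mem_Icc] at hs
  obtain ⟨hs0, hs2⟩ := hs
  rw [hK] at hs2
  simp only [hK]
  -- local notation
  set Xh : ℤ → ℝ := fun i => ze x i * ze x (s - i) with hXh
  set Yh : ℤ → ℝ := fun i => ze y ((n:ℤ)+1-i) * ze y ((n:ℤ)+1-s+i) with hYh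
  -- summand rewrites
  have hA : ∀ i : ℤ, ch (a+n+1) ((b:ℤ)+i) * ze x i * ze y ((n:ℤ)+1-i) *
      (ch (a+n+1) ((b:ℤ)+(s-i)) * ze x (s-i) * ze y ((n:ℤ)+1-(s-i)))
      = (ch (a+n+1) ((b:ℤ)+i) * ch (a+n+1) ((b:ℤ)+(s-i))) * (Xh i * Yh i) := by
    intro i
    simp only [hXh, hYh]
    rw [show (n:ℤ)+1-(s-i) = (n:ℤ)+1-s+i by ring]
    ring
  have hB : ∀ i : ℤ, ch (a+n) ((b:ℤ)+i) * ze x i * ze y ((n:ℤ)-i) *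
      (ch (a+n+2) ((b:ℤ)+(s-i)) * ze x (s-i) * ze y ((n:ℤ)+2-(s-i)))
      = (ch (a+n) ((b:ℤ)+i) * ch (a+n+2) ((b:ℤ)+(s-i))) * (Xh i * Yh (i+1)) := by
    intro i
    simp only [hXh, hYh]
    rw [show (n:ℤ)+1-(i+1) = (n:ℤ)-i by ring,
      show (n:ℤ)+1-s+(i+1) = (n:ℤ)+2-(s-i) by ring]
    ring
  -- symmetry / vanishing of Xh, Yh
  have symX : ∀ i, Xh (s - i) = Xh i := by
    intro i; simp only [hXh]; rw [show s - (s - i) = i by ring]; ring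
  have lowX : ∀ i : ℤ, i < 0 → Xh i = 0 := by
    intro i h; simp only [hXh]; rw [ze_neg x h, zero_mul]
  have symY : ∀ i, Yh (s - i) = Yh i := by
    intro i; simp only [hYh]
    rw [show (n:ℤ)+1-(s-i) = (n:ℤ)+1-s+i by ring,
      show (n:ℤ)+1-s+(s-i) = (n:ℤ)+1-i by ring]
    ring
  have lowY : ∀ i : ℤ, i < s - ((n:ℤ)+1) → Yh i = 0 := by
    intro i h; simp only [hYh]
    exact mul_eq_zero_of_right _ (ze_neg y (by omega))
  have highY : ∀ i : ℤ, (n:ℤ)+1 < i → Yh i = 0 := by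
    intro i h; simp only [hYh]
    exact mul_eq_zero_of_left (ze_neg y (by omega)) _
  have hXrep : ∀ i, Xh i = ∑ t ∈ Finset.Icc (0:ℤ) (s/2),
      (Xh t - Xh (t-1)) * (if t ≤ i ∧ i ≤ s - t then (1:ℝ) else 0) :=
    rep Xh s 0 symX lowX
  have hYrep : ∀ i, Yh i = ∑ p ∈ Finset.Icc (s - ((n:ℤ)+1)) (s/2),
      (Yh p - Yh (p-1)) * (if p ≤ i ∧ i ≤ s - p then (1:ℝ) else 0) :=
    rep Yh s (s - ((n:ℤ)+1)) symY lowY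
  -- nonnegativity of increments
  have hlam : ∀ t : ℤ, 2*t ≤ s → 0 ≤ Xh t - Xh (t-1) := by
    intro t hts
    have h := F1 x hxnonneg hxlc hxniz (show t ≤ s - t by omega)
    have e1 : Xh (t-1) = ze x (t-1) * ze x (s-t+1) := by
      simp only [hXh]; rw [show s - (t-1) = s-t+1 by ring]
    have e2 : Xh t = ze x t * ze x (s-t) := by simp only [hXh]
    rw [e1, e2]; linarith
  have hmu : ∀ p : ℤ, 2*p ≤ s → 0 ≤ Yh p - Yh (p-1) := by
    intro p hps
    have h := F1 y hynonneg hylc hyniz (show (n:ℤ)+1-s+p ≤ (n:ℤ)+1-p by omega)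
    have e1 : Yh (p-1) = ze y ((n:ℤ)+1-s+p-1) * ze y ((n:ℤ)+1-p+1) := by
      simp only [hYh]
      rw [show (n:ℤ)+1-(p-1) = (n:ℤ)+1-p+1 by ring,
        show (n:ℤ)+1-s+(p-1) = (n:ℤ)+1-s+p-1 by ring]
      ring
    have e2 : Yh p = ze y ((n:ℤ)+1-s+p) * ze y ((n:ℤ)+1-p) := by
      simp only [hYh]; ring
    rw [e1, e2]; linarith
  -- extension of ranges
  have extB : ∑ i ∈ Finset.Icc (0:ℤ) ((n:ℤ)+2),
      (ch (a+n) ((b:ℤ)+i) * ch (a+n+2) ((b:ℤ)+(s-i))) * (Xh i * Yh (i+1))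
      = ∑ i ∈ Finset.Icc (-(n:ℤ)-3) (2*(n:ℤ)+4),
      (ch (a+n) ((b:ℤ)+i) * ch (a+n+2) ((b:ℤ)+(s-i))) * (Xh i * Yh (i+1)) := by
    apply Finset.sum_subset
    · intro i hi; simp only [Finset.mem_Icc] at hi ⊢; omega
    · intro i hi hi2
      simp only [Finset.mem_Icc] at hi hi2
      rcases (by omega : i < 0 ∨ (n:ℤ)+2 < i) with h | h
      · rw [lowX i h]; ring
      · rw [highY (i+1) (by omega)]; ring
  have extA : ∑ i ∈ Finset.Icc (0:ℤ) ((n:ℤ)+2),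
      (ch (a+n+1) ((b:ℤ)+i) * ch (a+n+1) ((b:ℤ)+(s-i))) * (Xh i * Yh i)
      = ∑ i ∈ Finset.Icc (-(n:ℤ)-3) (2*(n:ℤ)+4),
      (ch (a+n+1) ((b:ℤ)+i) * ch (a+n+1) ((b:ℤ)+(s-i))) * (Xh i * Yh i) := by
    apply Finset.sum_subset
    · intro i hi; simp only [Finset.mem_Icc] at hi ⊢; omega
    · intro i hi hi2
      simp only [Finset.mem_Icc] at hi hi2
      rcases (by omega : i < 0 ∨ (n:ℤ)+2 < i) with h | h
      · rw [lowX i h]; ring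
      · rw [highY i (by omega)]; ring
  -- the expansions into the (t,p) decomposition
  have expandA : ∑ i ∈ Finset.Icc (-(n:ℤ)-3) (2*(n:ℤ)+4),
      (ch (a+n+1) ((b:ℤ)+i) * ch (a+n+1) ((b:ℤ)+(s-i))) * (Xh i * Yh i)
      = ∑ t ∈ Finset.Icc (0:ℤ) (s/2), ∑ p ∈ Finset.Icc (s - ((n:ℤ)+1)) (s/2),
          ((Xh t - Xh (t-1)) * (Yh p - Yh (p-1))) *
          (∑ i ∈ Finset.Icc (-(n:ℤ)-3) (2*(n:ℤ)+4),
            (ch (a+n+1) ((b:ℤ)+i) * ch (a+n+1) ((b:ℤ)+(s-i))) *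
            ((if t ≤ i ∧ i ≤ s - t then (1:ℝ) else 0) *
             (if p ≤ i ∧ i ≤ s - p then (1:ℝ) else 0))) :=
    expand_lemma _ _ _ _ Xh Yh _ _ _ _ hXrep hYrep
  have expandB : ∑ i ∈ Finset.Icc (-(n:ℤ)-3) (2*(n:ℤ)+4),
      (ch (a+n) ((b:ℤ)+i) * ch (a+n+2) ((b:ℤ)+(s-i))) * (Xh i * Yh (i+1))
      = ∑ t ∈ Finset.Icc (0:ℤ) (s/2), ∑ p ∈ Finset.Icc (s - ((n:ℤ)+1)) (s/2),
          ((Xh t - Xh (t-1)) * (Yh p - Yh (p-1))) *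
          (∑ i ∈ Finset.Icc (-(n:ℤ)-3) (2*(n:ℤ)+4),
            (ch (a+n) ((b:ℤ)+i) * ch (a+n+2) ((b:ℤ)+(s-i))) *
            ((if t ≤ i ∧ i ≤ s - t then (1:ℝ) else 0) *
             (if p ≤ i+1 ∧ i+1 ≤ s - p then (1:ℝ) else 0))) :=
    expand_lemma _ _ _ _ Xh (fun i => Yh (i+1)) _ _ _ _ hXrep (fun i => hYrep (i+1))
  rw [Finset.sum_congr rfl (fun i _ => hB i), Finset.sum_congr rfl (fun i _ => hA i),
    extB, extA, expandB, expandA]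
  apply Finset.sum_le_sum
  intro t ht
  apply Finset.sum_le_sum
  intro p hp
  simp only [Finset.mem_Icc] at ht hp
  have ht2 : 2*t ≤ s := by omega
  have hp2 : 2*p ≤ s := by omega
  apply mul_le_mul_of_nonneg_left _ (mul_nonneg (hlam t ht2) (hmu p hp2))
  -- the inner inequality, via `key`
  have mB : ∀ i ∈ Finset.Icc (-(n:ℤ)-3) (2*(n:ℤ)+4),
      (ch (a+n) ((b:ℤ)+i) * ch (a+n+2) ((b:ℤ)+(s-i))) *
        ((if t ≤ i ∧ i ≤ s - t then (1:ℝ) else 0) *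
         (if p ≤ i+1 ∧ i+1 ≤ s - p then (1:ℝ) else 0))
      = if max t (p-1) ≤ i ∧ i ≤ min (s-t) (s-p-1) then
          ch (a+n) ((b:ℤ)+i) * ch (a+n+2) ((b:ℤ)+(s-i)) else 0 := by
    intro i _
    by_cases h1 : t ≤ i ∧ i ≤ s - t
    · by_cases h2 : p ≤ i+1 ∧ i+1 ≤ s-p
      · rw [if_pos h1, if_pos h2, if_pos (by omega)]; ring
      · rw [if_pos h1, if_neg h2, if_neg (by omega)]; ring
    · rw [if_neg h1,
        if_neg (show ¬(max t (p-1) ≤ i ∧ i ≤ min (s-t) (s-p-1)) by omega)]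
      ring
  have mA : ∀ i ∈ Finset.Icc (-(n:ℤ)-3) (2*(n:ℤ)+4),
      (ch (a+n+1) ((b:ℤ)+i) * ch (a+n+1) ((b:ℤ)+(s-i))) *
        ((if t ≤ i ∧ i ≤ s - t then (1:ℝ) else 0) *
         (if p ≤ i ∧ i ≤ s - p then (1:ℝ) else 0))
      = if max t p ≤ i ∧ i ≤ min (s-t) (s-p) then
          ch (a+n+1) ((b:ℤ)+i) * ch (a+n+1) ((b:ℤ)+(s-i)) else 0 := by
    intro i _
    by_cases h1 : t ≤ i ∧ i ≤ s - t
    · by_cases h2 : p ≤ i ∧ i ≤ s-p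
      · rw [if_pos h1, if_pos h2, if_pos (by omega)]; ring
      · rw [if_pos h1, if_neg h2, if_neg (by omega)]; ring
    · rw [if_neg h1,
        if_neg (show ¬(max t p ≤ i ∧ i ≤ min (s-t) (s-p)) by omega)]
      ring
  rw [Finset.sum_congr rfl mB, Finset.sum_congr rfl mA, ← Finset.sum_filter,
    ← Finset.sum_filter]
  rw [show (Finset.Icc (-(n:ℤ)-3) (2*(n:ℤ)+4)).filter
        (fun i => max t (p-1) ≤ i ∧ i ≤ min (s-t) (s-p-1))
      = Finset.Icc (max t (p-1)) (min (s-t) (s-p-1)) by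
    ext i; simp only [Finset.mem_filter, Finset.mem_Icc]; omega]
  rw [show (Finset.Icc (-(n:ℤ)-3) (2*(n:ℤ)+4)).filter
        (fun i => max t p ≤ i ∧ i ≤ min (s-t) (s-p))
      = Finset.Icc (max t p) (min (s-t) (s-p)) by
    ext i; simp only [Finset.mem_filter, Finset.mem_Icc]; omega]
  exact key (a+n) (b:ℤ) s t p ht2 hp2
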